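/- Fix n ∈ ℕ. Let V_1, …, V_n be i.i.d. uniform random variables on [0,1], and for each t > 0 let B_t : [0,1] → [0,1] be a random nondecreasing right-continuous function with B_t(1) = 1 such that (V_1,…,V_n) is independent of B_t, and define the generalized inverse B_t^{−1}(v) := inf{ x ∈ [0,1] : B_t(x) > v } (with inf ∅ = 1). Assume that sup_{x∈[0,1]} |B_t(x) − x| → 0 in probability as t ↓ 0. Then P( B_t^{−1}(V_1), …, B_t^{−1}(V_n) are pairwise distinct ) → 1 as t ↓ 0. -/

import Mathlib

open MeasureTheory ProbabilityTheory Filter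
open scoped ENNReal

section Aux

lemma binv_lb {Bf : ℝ → ℝ} {δ v : ℝ} (hδ : 0 < δ)
    (hub : ∀ x ∈ Set.Icc (0:ℝ) 1, |Bf x - x| ≤ δ) (hv : v ∈ Set.Icc (0:ℝ) 1) :
    v - δ ≤ sInf (insert 1 {x ∈ Set.Icc (0:ℝ) 1 | v < Bf x}) := by
  apply le_csInf ⟨1, Set.mem_insert _ _⟩
  rintro b (rfl | ⟨hb, hvb⟩)
  · linarith [hv.2]
  · have h1 := (abs_le.mp (hub b hb)).2
    linarith

lemma binv_ub {Bf : ℝ → ℝ} {δ v : ℝ} (hδ : 0 < δ)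
    (hub : ∀ x ∈ Set.Icc (0:ℝ) 1, |Bf x - x| ≤ δ) (hv : v ∈ Set.Icc (0:ℝ) 1) :
    sInf (insert 1 {x ∈ Set.Icc (0:ℝ) 1 | v < Bf x}) ≤ v + δ := by
  have hbdd : BddBelow (insert 1 {x ∈ Set.Icc (0:ℝ) 1 | v < Bf x}) := by
    refine ⟨0, ?_⟩
    rintro b (rfl | hb)
    · norm_num
    · exact hb.1.1
  rcases le_or_gt 1 (v + δ) with h | h
  · exact le_trans (csInf_le hbdd (Set.mem_insert _ _)) h
  · refine le_of_forall_gt_imp_ge_of_dense fun y hy => ?_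
    have hxgt : v + δ < min y 1 := lt_min hy h
    have hx0 : (0:ℝ) ≤ min y 1 := le_trans (by linarith [hv.1]) hxgt.le
    have hmem : min y 1 ∈ {x ∈ Set.Icc (0:ℝ) 1 | v < Bf x} := by
      refine ⟨⟨hx0, min_le_right _ _⟩, ?_⟩
      have h2 := (abs_le.mp (hub _ ⟨hx0, min_le_right _ _⟩)).1
      linarith
    exact le_trans (csInf_le hbdd (Set.mem_insert_of_mem _ hmem)) (min_le_left _ _)

lemma binv_close {Bf : ℝ → ℝ} {δ v v' : ℝ} (hδ : 0 < δ)
    (hub : ∀ x ∈ Set.Icc (0:ℝ) 1, |Bf x - x| ≤ δ) (hv : v ∈ Set.Icc (0:ℝ) 1)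
    (hv' : v' ∈ Set.Icc (0:ℝ) 1)
    (heq : sInf (insert 1 {x ∈ Set.Icc (0:ℝ) 1 | v < Bf x})
         = sInf (insert 1 {x ∈ Set.Icc (0:ℝ) 1 | v' < Bf x})) :
    |v - v'| ≤ 2 * δ := by
  have h1 := binv_lb hδ hub hv
  have h2 := binv_ub hδ hub hv
  have h3 := binv_lb hδ hub hv'
  have h4 := binv_ub hδ hub hv'
  rw [abs_le]
  constructor <;> linarith

lemma binv_lt_iff' {Bf : ℝ → ℝ}
    (hmono : ∀ x ∈ Set.Icc (0:ℝ) 1, ∀ y ∈ Set.Icc (0:ℝ) 1, x ≤ y → Bf x ≤ Bf y)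
    {v a : ℝ} :
    sInf (insert 1 {x ∈ Set.Icc (0:ℝ) 1 | v < Bf x}) < a ↔
      (1:ℝ) < a ∨ ∃ q : ℚ, ((q:ℝ) ∈ Set.Icc (0:ℝ) 1 ∧ (q:ℝ) < a) ∧ v < Bf q := by
  constructor
  · intro h
    obtain ⟨z, hz, hza⟩ := exists_lt_of_csInf_lt ⟨1, Set.mem_insert _ _⟩ h
    rcases hz with rfl | ⟨hzI, hzB⟩
    · exact Or.inl hza
    rcases eq_or_lt_of_le hzI.2 with rfl | hz1
    · exact Or.inl hza
    · obtain ⟨q, hq1, hq2⟩ := exists_rat_btwn (lt_min hza hz1)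
      refine Or.inr ⟨q, ⟨⟨le_trans hzI.1 hq1.le, (lt_min_iff.mp hq2).2.le⟩,
        (lt_min_iff.mp hq2).1⟩, lt_of_lt_of_le hzB (hmono z hzI q
          ⟨le_trans hzI.1 hq1.le, (lt_min_iff.mp hq2).2.le⟩ hq1.le)⟩
  · have hbdd : BddBelow (insert 1 {x ∈ Set.Icc (0:ℝ) 1 | v < Bf x}) := by
      refine ⟨0, ?_⟩
      rintro b (rfl | hb)
      · norm_num
      · exact hb.1.1
    rintro (h | ⟨q, ⟨hqI, hqa⟩, hqB⟩)
    · exact lt_of_le_of_lt (csInf_le hbdd (Set.mem_insert _ _)) h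
    · exact lt_of_le_of_lt (csInf_le hbdd (Set.mem_insert_of_mem _ ⟨hqI, hqB⟩)) hqa

lemma pair_prob {Ω : Type*} [MeasureSpace Ω] [IsProbabilityMeasure (ℙ : Measure Ω)]
    {X Y : Ω → ℝ} (hX : Measurable X) (hY : Measurable Y)
    (hXu : Measure.map X ℙ = volume.restrict (Set.Icc (0:ℝ) 1))
    (hYu : Measure.map Y ℙ = volume.restrict (Set.Icc (0:ℝ) 1))
    (hind : IndepFun X Y ℙ) {c : ℝ} :
    ℙ {ω | |X ω - Y ω| ≤ c} ≤ ENNReal.ofReal (2*c) := by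
  have hmap := (indepFun_iff_map_prod_eq_prod_map_map hX.aemeasurable hY.aemeasurable).mp hind
  have hT : MeasurableSet {p : ℝ × ℝ | |p.1 - p.2| ≤ c} :=
    measurableSet_le ((measurable_fst.sub measurable_snd).abs) measurable_const
  have heq : ℙ {ω | |X ω - Y ω| ≤ c}
      = (Measure.map (fun ω => (X ω, Y ω)) ℙ) {p : ℝ × ℝ | |p.1 - p.2| ≤ c} := by
    rw [Measure.map_apply (hX.prodMk hY) hT]; rfl
  rw [heq, hmap, hXu, hYu, Measure.prod_apply hT]
  have hslice : ∀ u : ℝ, (volume.restrict (Set.Icc (0:ℝ) 1))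
      (Prod.mk u ⁻¹' {p : ℝ × ℝ | |p.1 - p.2| ≤ c}) ≤ ENNReal.ofReal (2*c) := by
    intro u
    have hpre : (Prod.mk u ⁻¹' {p : ℝ × ℝ | |p.1 - p.2| ≤ c}) = Set.Icc (u - c) (u + c) := by
      ext v
      simp only [Set.mem_preimage, Set.mem_setOf_eq, Set.mem_Icc, abs_le]
      constructor <;> rintro ⟨h1, h2⟩ <;> constructor <;> linarith
    rw [hpre]
    refine le_trans (Measure.restrict_apply_le _ _) ?_
    rw [Real.volume_Icc]
    exact ENNReal.ofReal_le_ofReal (by ring_nf; linarith [le_refl (2*c)])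
  calc ∫⁻ u, (volume.restrict (Set.Icc (0:ℝ) 1))
        (Prod.mk u ⁻¹' {p : ℝ × ℝ | |p.1 - p.2| ≤ c}) ∂(volume.restrict (Set.Icc (0:ℝ) 1))
      ≤ ∫⁻ _, ENNReal.ofReal (2*c) ∂(volume.restrict (Set.Icc (0:ℝ) 1)) :=
        lintegral_mono hslice
    _ = ENNReal.ofReal (2*c) := by
        rw [lintegral_const, Measure.restrict_apply_univ, Real.volume_Icc]
        norm_num

lemma binv_meas {Ω : Type*} [MeasurableSpace Ω] {V : Ω → ℝ} {Bt : Ω → ℝ → ℝ}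
    (hV : Measurable V) (hB : ∀ x, Measurable fun ω => Bt ω x)
    (hmono : ∀ ω, ∀ x ∈ Set.Icc (0:ℝ) 1, ∀ y ∈ Set.Icc (0:ℝ) 1, x ≤ y → Bt ω x ≤ Bt ω y) :
    Measurable fun ω => sInf (insert (1:ℝ) {x ∈ Set.Icc (0:ℝ) 1 | V ω < Bt ω x}) := by
  apply measurable_of_Iio
  intro a
  have hset : (fun ω => sInf (insert (1:ℝ) {x ∈ Set.Icc (0:ℝ) 1 | V ω < Bt ω x})) ⁻¹' Set.Iio a
      = {ω | (1:ℝ) < a} ∪ ⋃ q : ℚ,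
        ({ω | (q:ℝ) ∈ Set.Icc (0:ℝ) 1 ∧ (q:ℝ) < a} ∩ {ω | V ω < Bt ω q}) := by
    ext ω
    simp only [Set.mem_preimage, Set.mem_Iio, Set.mem_union, Set.mem_iUnion,
      Set.mem_inter_iff, Set.mem_setOf_eq]
    rw [binv_lt_iff' (hmono ω)]
  rw [hset]
  exact (MeasurableSet.const _).union (MeasurableSet.iUnion fun q =>
    (MeasurableSet.const _).inter (measurableSet_lt hV (hB (q:ℝ))))

end Aux

/-- let `V_1, …, V_n` be i.i.d. uniform-`[0,1]` random
variables and, for each `t > 0`, let `B_t : [0,1] → [0,1]` be a random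
nondecreasing right-continuous function with `B_t(1) = 1`, independent of
`(V_1, …, V_n)`.  If `sup_{x ∈ [0,1]} |B_t(x) - x| → 0` in probability as
`t ↓ 0`, then `P(B_t^{-1}(V_1), …, B_t^{-1}(V_n)` pairwise distinct`) → 1` as
`t ↓ 0`, where `B_t^{-1}(v) = inf {x ∈ [0,1] : B_t(x) > v}` (with `inf ∅ = 1`). -/
theorem stmt19 {Ω : Type*} [MeasureSpace Ω] [IsProbabilityMeasure (ℙ : Measure Ω)]
    (n : ℕ) (V : Fin n → Ω → ℝ)
    (hVmeas : ∀ i, Measurable (V i))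
    (hViid : iIndepFun V ℙ)
    (hVunif : ∀ i, Measure.map (V i) ℙ = volume.restrict (Set.Icc (0 : ℝ) 1))
    (B : ℝ → Ω → ℝ → ℝ)
    (hBmeas : ∀ t : ℝ, 0 < t → ∀ x : ℝ, Measurable fun ω => B t ω x)
    (hBmono : ∀ t : ℝ, 0 < t → ∀ ω, ∀ x ∈ Set.Icc (0 : ℝ) 1, ∀ y ∈ Set.Icc (0 : ℝ) 1,
      x ≤ y → B t ω x ≤ B t ω y)
    (hBrc : ∀ t : ℝ, 0 < t → ∀ ω, ∀ x ∈ Set.Ico (0 : ℝ) 1,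
      ContinuousWithinAt (B t ω) (Set.Ici x) x)
    (hBone : ∀ t : ℝ, 0 < t → ∀ ω, B t ω 1 = 1)
    (hBrange : ∀ t : ℝ, 0 < t → ∀ ω, ∀ x ∈ Set.Icc (0 : ℝ) 1, B t ω x ∈ Set.Icc (0 : ℝ) 1)
    (hBindep : ∀ t : ℝ, 0 < t →
      IndepFun (fun ω => (fun i : Fin n => V i ω)) (fun ω => B t ω) ℙ)
    (hBconv : ∀ ε : ℝ, 0 < ε →
      Tendsto (fun t : ℝ => ℙ {ω | ε ≤ ⨆ x : Set.Icc (0 : ℝ) 1, |B t ω x - x|})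
        (nhdsWithin 0 (Set.Ioi 0)) (nhds 0)) :
    Tendsto (fun t : ℝ => ℙ {ω | Function.Injective fun i : Fin n =>
        sInf (insert (1 : ℝ) {x ∈ Set.Icc (0 : ℝ) 1 | V i ω < B t ω x})})
      (nhdsWithin 0 (Set.Ioi 0)) (nhds 1) := by
  classical
  let F : ℝ → Fin n → Ω → ℝ := fun t i ω =>
    sInf (insert (1:ℝ) {x ∈ Set.Icc (0:ℝ) 1 | V i ω < B t ω x})
  show Tendsto (fun t : ℝ => ℙ {ω | Function.Injective fun i : Fin n => F t i ω})
      (nhdsWithin 0 (Set.Ioi 0)) (nhds 1)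
  have hfmeas : ∀ t : ℝ, 0 < t → ∀ i, Measurable (F t i) :=
    fun t ht i => binv_meas (hVmeas i) (hBmeas t ht) (hBmono t ht)
  have hInjMeas : ∀ t : ℝ, 0 < t →
      MeasurableSet {ω | Function.Injective fun i : Fin n => F t i ω} := by
    intro t ht
    have hset : {ω | Function.Injective fun i : Fin n => F t i ω}
        = ⋂ i, ⋂ j, {ω | F t i ω = F t j ω → i = j} := by
      ext ω
      simp only [Set.mem_setOf_eq, Set.mem_iInter]
      exact ⟨fun h i j => @h i j, fun h a b hab => h a b hab⟩
    rw [hset]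
    refine MeasurableSet.iInter fun i => MeasurableSet.iInter fun j => ?_
    by_cases hij : i = j
    · subst hij; simp
    · have h2 : {ω | F t i ω = F t j ω → i = j} = {ω | F t i ω = F t j ω}ᶜ := by
        ext ω; simp [hij]
      rw [h2]
      exact (measurableSet_eq_fun (hfmeas t ht i) (hfmeas t ht j)).compl
  have key : Tendsto (fun t : ℝ => ℙ {ω | ¬ Function.Injective fun i : Fin n => F t i ω})
      (nhdsWithin 0 (Set.Ioi 0)) (nhds 0) := by
    rw [ENNReal.tendsto_nhds_zero]
    intro ε hε
    have hε2 : (0:ℝ≥0∞) < ε / 2 := ENNReal.half_pos hε.ne'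
    set ε' : ℝ≥0∞ := min (ε/2) 1 with hε'
    have hε'pos : 0 < ε' := lt_min hε2 zero_lt_one
    have hε'top : ε' ≠ ⊤ := ne_top_of_le_ne_top ENNReal.one_ne_top (min_le_right _ _)
    set r : ℝ := ε'.toReal with hr
    have hrpos : 0 < r := ENNReal.toReal_pos hε'pos.ne' hε'top
    set s : ℝ := (n : ℝ) * n with hs
    have hs0 : 0 ≤ s := by positivity
    set δ : ℝ := r / (4 * s + 4) with hδdef
    have h4s : (0:ℝ) < 4 * s + 4 := by linarith
    have hδpos : 0 < δ := div_pos hrpos h4s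
    have hkey : s * (4 * δ) ≤ r := by
      have hd : δ * (4 * s + 4) = r := div_mul_cancel₀ r h4s.ne'
      nlinarith [hδpos.le]
    have hsum : (∑' _ : Fin n × Fin n, ENNReal.ofReal (4 * δ)) ≤ ε / 2 := by
      rw [tsum_fintype, Finset.sum_const, Finset.card_univ, Fintype.card_prod,
        Fintype.card_fin, nsmul_eq_mul]
      have hcast : ((n * n : ℕ) : ℝ≥0∞) * ENNReal.ofReal (4 * δ)
          = ENNReal.ofReal (s * (4 * δ)) := by
        rw [ENNReal.ofReal_mul hs0, ← ENNReal.ofReal_natCast (n*n)]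
        congr 1
        rw [hs]
        push_cast
        ring
      rw [hcast]
      calc ENNReal.ofReal (s * (4*δ)) ≤ ENNReal.ofReal r := ENNReal.ofReal_le_ofReal hkey
        _ = ε' := ENNReal.ofReal_toReal hε'top
        _ ≤ ε / 2 := min_le_left _ _
    have hev : ∀ᶠ t in nhdsWithin (0:ℝ) (Set.Ioi 0),
        ℙ {ω | δ ≤ ⨆ x : Set.Icc (0:ℝ) 1, |B t ω x - x|} ≤ ε / 2 :=
      (ENNReal.tendsto_nhds_zero.mp (hBconv δ hδpos)) (ε/2) hε2
    filter_upwards [hev, self_mem_nhdsWithin] with t htev ht'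
    have ht : (0:ℝ) < t := ht'
    set D : Set Ω := {ω | δ ≤ ⨆ x : Set.Icc (0:ℝ) 1, |B t ω x - x|} with hD
    set bad : Set Ω := ⋃ i : Fin n, {ω | V i ω ∉ Set.Icc (0:ℝ) 1} with hbadset
    set E : Fin n × Fin n → Set Ω := fun p =>
      {ω | p.1 ≠ p.2 ∧ |V p.1 ω - V p.2 ω| ≤ 2 * δ} with hE
    have hsub : {ω | ¬ Function.Injective fun i : Fin n => F t i ω}
        ⊆ D ∪ (bad ∪ ⋃ p : Fin n × Fin n, E p) := by
      intro ω hω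
      by_cases hωD : ω ∈ D
      · exact Or.inl hωD
      by_cases hωbad : ω ∈ bad
      · exact Or.inr (Or.inl hωbad)
      refine Or.inr (Or.inr ?_)
      have hVicc : ∀ i, V i ω ∈ Set.Icc (0:ℝ) 1 := by
        intro i
        by_contra hcon
        exact hωbad (Set.mem_iUnion.mpr ⟨i, hcon⟩)
      have hsup : ∀ x ∈ Set.Icc (0:ℝ) 1, |B t ω x - x| ≤ δ := by
        intro x hx
        have hbd : BddAbove (Set.range fun x : Set.Icc (0:ℝ) 1 => |B t ω x - x|) := by
          refine ⟨1, ?_⟩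
          rintro y ⟨z, rfl⟩
          have h1 := hBrange t ht ω z z.2
          have h2 := z.2
          rw [abs_le]
          exact ⟨by linarith [h1.1, h2.2], by linarith [h1.2, h2.1]⟩
        have hle : |B t ω x - x| ≤ ⨆ x : Set.Icc (0:ℝ) 1, |B t ω x - x| :=
          le_ciSup hbd (⟨x, hx⟩ : Set.Icc (0:ℝ) 1)
        have hlt : (⨆ x : Set.Icc (0:ℝ) 1, |B t ω x - x|) < δ := not_le.mp hωD
        linarith
      obtain ⟨i, j, heq, hne⟩ := Function.not_injective_iff.mp hω
      refine Set.mem_iUnion.mpr ⟨(i, j), hne, ?_⟩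
      exact binv_close hδpos hsup (hVicc i) (hVicc j) heq
    have hbad0 : ℙ bad = 0 := by
      refine measure_iUnion_null fun i => ?_
      have hpre : {ω | V i ω ∉ Set.Icc (0:ℝ) 1} = V i ⁻¹' (Set.Icc (0:ℝ) 1)ᶜ := rfl
      rw [hpre, ← Measure.map_apply (hVmeas i) measurableSet_Icc.compl, hVunif i,
        Measure.restrict_apply measurableSet_Icc.compl]
      simp
    have hEp : ∀ p : Fin n × Fin n, ℙ (E p) ≤ ENNReal.ofReal (4 * δ) := by
      intro p
      by_cases hp : p.1 = p.2
      · have hEe : E p = ∅ := by ext ω; simp [hE, hp]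
        simp [hEe]
      · have hsub2 : E p ⊆ {ω | |V p.1 ω - V p.2 ω| ≤ 2 * δ} := fun ω hω => hω.2
        refine le_trans (measure_mono hsub2) ?_
        have h44 : (4:ℝ) * δ = 2 * (2 * δ) := by ring
        rw [h44]
        exact pair_prob (hVmeas p.1) (hVmeas p.2) (hVunif p.1) (hVunif p.2)
          (hViid.indepFun hp)
    calc ℙ {ω | ¬ Function.Injective fun i : Fin n => F t i ω}
        ≤ ℙ (D ∪ (bad ∪ ⋃ p : Fin n × Fin n, E p)) := measure_mono hsub
      _ ≤ ℙ D + ℙ (bad ∪ ⋃ p : Fin n × Fin n, E p) := measure_union_le _ _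
      _ ≤ ℙ D + (ℙ bad + ℙ (⋃ p : Fin n × Fin n, E p)) :=
          add_le_add_right (measure_union_le _ _) _
      _ = ℙ D + ℙ (⋃ p : Fin n × Fin n, E p) := by rw [hbad0, zero_add]
      _ ≤ ε / 2 + (∑' p : Fin n × Fin n, ℙ (E p)) := add_le_add htev (measure_iUnion_le _)
      _ ≤ ε / 2 + (∑' _ : Fin n × Fin n, ENNReal.ofReal (4 * δ)) :=
          add_le_add_right (ENNReal.tsum_le_tsum hEp) _
      _ ≤ ε / 2 + ε / 2 := add_le_add_right hsum _
      _ = ε := ENNReal.add_halves ε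
  have hcont : Tendsto (fun x : ℝ≥0∞ => 1 - x) (nhds 0) (nhds 1) := by
    have h := (ENNReal.continuous_sub_left (a := 1) ENNReal.one_ne_top).tendsto 0
    simpa using h
  refine (hcont.comp key).congr' ?_
  filter_upwards [self_mem_nhdsWithin] with t ht'
  have ht : (0:ℝ) < t := ht'
  have hc := prob_compl_eq_one_sub (μ := ℙ) ((hInjMeas t ht).compl)
  rw [compl_compl] at hc
  simp only [Function.comp_apply]
  have hceq : {ω | ¬ Function.Injective fun i : Fin n => F t i ω}
      = {ω | Function.Injective fun i : Fin n => F t i ω}ᶜ := rfl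
  rw [hceq, ← hc]
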